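/- With P_k defined by the entries α_k, γ_k as above (and P₀ = A⁻¹MA⁻¹B = [[b−d, b+c−(a+d)],[d, d−c]]), the recursion P_k = B⁻¹·A^(2+(−1)^k·n_k)·P_{k−1} holds for all 1 ≤ k ≤ j. -/

import Mathlib

open Matrix

def A : (Matrix (Fin 2) (Fin 2) ℤ)ˣ :=
  ⟨!![1,1;0,1], !![1,-1;0,1], by decide, by decide⟩

def B : (Matrix (Fin 2) (Fin 2) ℤ)ˣ :=
  ⟨!![1,0;1,1], !![1,0;-1,1], by decide, by decide⟩

lemma A_zpow (m : ℤ) :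
    ((A ^ m : (Matrix (Fin 2) (Fin 2) ℤ)ˣ) : Matrix (Fin 2) (Fin 2) ℤ) = !![1, m; 0, 1] := by
  induction m using Int.induction_on with
  | zero => simp [Matrix.one_fin_two]
  | succ k ih =>
      rw [_root_.zpow_add_one, Units.val_mul, ih]
      show _ * (A : Matrix (Fin 2) (Fin 2) ℤ) = _
      simp [A, Matrix.mul_fin_two]
      ring_nf
  | pred k ih =>
      rw [_root_.zpow_sub_one, Units.val_mul, ih]
      show _ * ((A⁻¹ : _ˣ) : Matrix (Fin 2) (Fin 2) ℤ) = _
      have : ((A⁻¹ : (Matrix (Fin 2) (Fin 2) ℤ)ˣ) : Matrix (Fin 2) (Fin 2) ℤ) = !![1,-1;0,1] := rfl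
      rw [this]
      simp [Matrix.mul_fin_two]
      ring_nf

lemma B_inv : ((B⁻¹ : (Matrix (Fin 2) (Fin 2) ℤ)ˣ) : Matrix (Fin 2) (Fin 2) ℤ) = !![1,0;-1,1] := rfl

theorem P_recursion (a b c d : ℤ) (hd : d ≠ 0)
    (hdet : a * d - b * c = 1 ∨ a * d - b * c = -1)
    (j : ℕ) (n p q : ℕ → ℤ)
    (hn : ∀ i, 2 ≤ i → i ≤ j → 1 ≤ n i)
    (hp0 : p 0 = 1) (hq0 : q 0 = 0) (hp1 : p 1 = n 1) (hq1 : q 1 = 1)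
    (hp : ∀ i, 2 ≤ i → i ≤ j → p i = n i * p (i - 1) + p (i - 2))
    (hq : ∀ i, 2 ≤ i → i ≤ j → q i = n i * q (i - 1) + q (i - 2))
    (hbd : p j * d = q j * b)
    (α γ : ℕ → ℤ → ℤ → ℤ)
    (hα : ∀ k x y, α k x y =
      (-1) ^ (k / 2) * (q k * x - p k * y + (-1) ^ k * (q (k - 1) * x - p (k - 1) * y)))
    (hγ : ∀ k x y, γ k x y = (-1) ^ (k / 2) * (p k * y - q k * x))
    (P : ℕ → Matrix (Fin 2) (Fin 2) ℤ)
    (hP0 : P 0 = !![b - d, b + c - (a + d); d, d - c])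
    (hPk : ∀ k, 1 ≤ k → P k =
      !![α k b d, α k (b - a) (d - c); γ k b d, γ k (b - a) (d - c)]) :
    ∀ k, 1 ≤ k → k ≤ j →
      P k = ((B⁻¹ * A ^ ((2 : ℤ) + (-1) ^ k * n k) : (Matrix (Fin 2) (Fin 2) ℤ)ˣ) :
        Matrix (Fin 2) (Fin 2) ℤ) * P (k - 1) := by
  intro k hk hkj
  obtain ⟨m, rfl⟩ : ∃ m, k = m + 1 := ⟨k - 1, by omega⟩
  rw [Units.val_mul, B_inv, A_zpow]
  cases m with
  | zero =>
      rw [hP0, hPk 1 le_rfl]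
      ext i j'
      fin_cases i <;> fin_cases j' <;>
        simp [hα, hγ, hp0, hq0, hp1, hq1, Matrix.mul_fin_two] <;> ring
  | succ m =>
      have hpk : p (m + 2) = n (m + 2) * p (m + 1) + p m := hp (m + 2) (by omega) hkj
      have hqk : q (m + 2) = n (m + 2) * q (m + 1) + q m := hq (m + 2) (by omega) hkj
      simp only [Nat.add_sub_cancel]
      rw [hPk (m + 2) (by omega), hPk (m + 1) (by omega)]
      rcases Nat.even_or_odd m with ⟨t, rfl⟩ | ⟨t, rfl⟩
      · have e1 : (t + t + 2) / 2 = t + 1 := by omega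
        have e2 : (t + t + 1) / 2 = t := by omega
        have e3 : ((-1 : ℤ)) ^ (t + t + 2) = 1 := by
          rw [show t + t + 2 = 2 * (t + 1) by ring, pow_mul]; norm_num
        have e4 : ((-1 : ℤ)) ^ (t + t + 1) = -1 := by
          rw [pow_succ, show t + t = 2 * t by ring, pow_mul]; norm_num
        ext i j'
        fin_cases i <;> fin_cases j' <;>
          simp [hα, hγ, Matrix.mul_fin_two, e1, e2, e3, e4, pow_succ, hpk, hqk] <;> ring
      · have e1 : (2 * t + 1 + 2) / 2 = t + 1 := by omega
        have e2 : (2 * t + 1 + 1) / 2 = t + 1 := by omega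
        have e3 : ((-1 : ℤ)) ^ (2 * t + 1 + 2) = -1 := by
          rw [show 2 * t + 1 + 2 = 2 * (t + 1) + 1 by ring, pow_succ, pow_mul]; norm_num
        have e4 : ((-1 : ℤ)) ^ (2 * t + 1 + 1) = 1 := by
          rw [show 2 * t + 1 + 1 = 2 * (t + 1) by ring, pow_mul]; norm_num
        ext i j'
        fin_cases i <;> fin_cases j' <;>
          simp [hα, hγ, Matrix.mul_fin_two, e1, e2, e3, e4, pow_succ, hpk, hqk] <;> ring
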